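/- For every natural numbers n and k, every p ∈ [0, 1], and all real numbers a and x, there exists τ ∈ [0, 1] such that E_{N ∼ Binomial(n, p)}[ a^N · Σ_{l=k+1}^{N} binom(N, l) x^l ] = binom(n, k+1) · (a p x)^{k+1} · ( a p (1 + τ x) + 1 − p )^{n − k − 1}. -/

import Mathlib

open Set in
private lemma binomial_taylor_closed_form (n k : ℕ) (p a x : ℝ) :
    ∑ N ∈ Finset.range (n + 1),
        (n.choose N : ℝ) * p ^ N * (1 - p) ^ (n - N) * a ^ N *
          ∑ l ∈ Finset.Icc (k + 1) N, (N.choose l : ℝ) * x ^ l =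
      ∑ l ∈ Finset.Icc (k + 1) n,
        (n.choose l : ℝ) * (a * p * x) ^ l * (a * p + (1 - p)) ^ (n - l) := by
  have h1 : ∀ N ∈ Finset.range (n+1),
      (n.choose N : ℝ) * p ^ N * (1 - p) ^ (n - N) * a ^ N *
          ∑ l ∈ Finset.Icc (k + 1) N, (N.choose l : ℝ) * x ^ l
        = ∑ l ∈ Finset.Icc (k + 1) N,
            (n.choose N : ℝ) * p ^ N * (1 - p) ^ (n - N) * a ^ N * ((N.choose l : ℝ) * x ^ l) := by
    intro N _; rw [Finset.mul_sum]
  rw [Finset.sum_congr rfl h1]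
  rw [Finset.sum_comm' (t' := Finset.Icc (k+1) n) (s' := fun l => Finset.Icc l n)
    (by intro N l; simp only [Finset.mem_range, Finset.mem_Icc]; omega)]
  refine Finset.sum_congr rfl ?_
  intro l hl
  simp only [Finset.mem_Icc] at hl
  rw [← Finset.Ico_add_one_right_eq_Icc, Finset.sum_Ico_eq_sum_range]
  have hln : n + 1 - l = n - l + 1 := by omega
  rw [hln, add_pow, Finset.mul_sum]
  refine Finset.sum_congr rfl ?_
  intro i hi
  simp only [Finset.mem_range] at hi
  have hin : l + i ≤ n := by omega
  have hc : ((n.choose (l+i) : ℝ)) * ((l+i).choose l : ℝ)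
      = (n.choose l : ℝ) * ((n-l).choose i : ℝ) := by
    have := Nat.choose_mul (n := n) (Nat.le_add_right l i)
    have h2 : l + i - l = i := by omega
    rw [h2] at this
    exact_mod_cast this
  have hsub : n - (l + i) = n - l - i := by omega
  rw [hsub, pow_add, pow_add]
  calc (n.choose (l+i):ℝ) * (p^l * p^i) * (1-p)^(n-l-i) * (a^l*a^i) * (((l+i).choose l : ℝ) * x^l)
      = ((n.choose (l+i):ℝ) * ((l+i).choose l : ℝ)) * ((p^l * p^i) * (1-p)^(n-l-i) * (a^l*a^i) * x^l) := by ring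
    _ = ((n.choose l : ℝ) * ((n-l).choose i : ℝ)) * ((p^l * p^i) * (1-p)^(n-l-i) * (a^l*a^i) * x^l) := by rw [hc]
    _ = (n.choose l : ℝ) * (a*p*x)^l * ((a*p)^i * (1-p)^(n-l-i) * ((n-l).choose i : ℝ)) := by
        rw [mul_pow, mul_pow, mul_pow]; ring

open Set in
private lemma binomial_taylor_iter_deriv (q u : ℝ) (n : ℕ) :
    ∀ j : ℕ, ∀ t ∈ Icc (0:ℝ) 1,
      iteratedDerivWithin j (fun t => (q + u*t)^n) (Icc (0:ℝ) 1) t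
        = (n.descFactorial j : ℝ) * u^j * (q + u*t)^(n-j) := by
  intro j
  induction j with
  | zero => intro t ht; simp
  | succ j ih =>
    intro t ht
    have hud : UniqueDiffOn ℝ (Icc (0:ℝ) 1) := uniqueDiffOn_Icc zero_lt_one
    rw [iteratedDerivWithin_succ]
    have heq : Set.EqOn (iteratedDerivWithin j (fun t => (q + u*t)^n) (Icc (0:ℝ) 1))
        (fun t => (n.descFactorial j : ℝ) * u^j * (q + u*t)^(n-j)) (Icc (0:ℝ) 1) := ih
    rw [derivWithin_congr heq (ih t ht)]
    have hD : HasDerivAt (fun t : ℝ => (n.descFactorial j : ℝ) * u^j * (q + u*t)^(n-j))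
        ((n.descFactorial j : ℝ) * u^j * (((n-j : ℕ) : ℝ) * (q + u*t)^(n-j-1) * u)) t := by
      have h1 : HasDerivAt (fun t : ℝ => q + u*t) u t := by
        simpa using ((hasDerivAt_id t).const_mul u).const_add q
      exact (h1.pow (n-j)).const_mul _
    rw [hD.hasDerivWithinAt.derivWithin (hud t ht)]
    have : n.descFactorial (j+1) = (n - j) * n.descFactorial j := Nat.descFactorial_succ n j
    have hsub : n - j - 1 = n - (j+1) := by omega
    rw [hsub, this]
    push_cast
    ring

open Set in
private lemma binomial_taylor_step (n k : ℕ) (q u : ℝ) (hkn : k + 1 ≤ n) :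
    ∃ τ ∈ Icc (0:ℝ) 1,
      ∑ l ∈ Finset.Icc (k + 1) n, (n.choose l : ℝ) * u ^ l * q ^ (n - l)
        = (n.choose (k+1) : ℝ) * u ^ (k+1) * (q + u * τ) ^ (n - k - 1) := by
  set G : ℝ → ℝ := fun t => (q + u*t)^n with hG
  have hud : UniqueDiffOn ℝ (Icc (0:ℝ) 1) := uniqueDiffOn_Icc zero_lt_one
  have hcd : ContDiff ℝ (k : ℕ∞) G :=
    ((contDiff_const.add (contDiff_const.mul contDiff_id)).pow n)
  have hf : ContDiffOn ℝ (k : ℕ∞) G (Icc (0:ℝ) 1) := hcd.contDiffOn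
  have hf' : DifferentiableOn ℝ (iteratedDerivWithin k G (Icc (0:ℝ) 1)) (Ioo (0:ℝ) 1) := by
    have hDdiff : Differentiable ℝ
        (fun t : ℝ => (n.descFactorial k : ℝ) * u^k * (q + u*t)^(n-k)) :=
      (((differentiable_const q).add ((differentiable_const u).mul differentiable_id)).pow
        (n-k)).const_mul _
    refine (hDdiff.differentiableOn).congr ?_
    intro t ht
    exact binomial_taylor_iter_deriv q u n k t (Ioo_subset_Icc_self ht)
  obtain ⟨τ, hτ, hrem⟩ := taylor_mean_remainder_lagrange (n := k) (x₀ := 0) (x := 1) zero_ne_one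
    (by rw [uIcc_of_le zero_le_one]; exact hf)
    (by rw [uIcc_of_le zero_le_one, uIoo_of_le zero_le_one]; exact hf')
  rw [uIoo_of_le zero_le_one] at hτ
  rw [uIcc_of_le zero_le_one] at hrem
  refine ⟨τ, Ioo_subset_Icc_self hτ, ?_⟩
  rw [taylor_within_apply] at hrem
  have h0 : (0:ℝ) ∈ Icc (0:ℝ) 1 := by norm_num
  have hterm : ∀ i ∈ Finset.range (k+1),
      (((Nat.factorial i : ℝ)⁻¹ * ((1:ℝ) - 0) ^ i) • iteratedDerivWithin i G (Icc (0:ℝ) 1) 0)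
        = (n.choose i : ℝ) * u ^ i * q ^ (n - i) := by
    intro i _
    rw [binomial_taylor_iter_deriv q u n i 0 h0]
    rw [Nat.descFactorial_eq_factorial_mul_choose]
    have : (Nat.factorial i : ℝ) ≠ 0 := by exact_mod_cast i.factorial_ne_zero
    push_cast
    field_simp
    rw [smul_eq_mul, div_mul_eq_mul_div, div_eq_iff this]; ring
  rw [Finset.sum_congr rfl hterm] at hrem
  have hG1 : G 1 = ∑ i ∈ Finset.range (n+1), (n.choose i : ℝ) * u ^ i * q ^ (n - i) := by
    show (q + u*1)^n = _
    rw [mul_one, add_comm q u, add_pow]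
    exact Finset.sum_congr rfl (fun i _ => by ring)
  have hdiff : ∑ l ∈ Finset.Icc (k + 1) n, (n.choose l : ℝ) * u ^ l * q ^ (n - l)
      = G 1 - ∑ i ∈ Finset.range (k+1), (n.choose i : ℝ) * u ^ i * q ^ (n - i) := by
    rw [hG1, ← Finset.Ico_add_one_right_eq_Icc,
      Finset.sum_Ico_eq_sub _ (by omega : k + 1 ≤ n + 1)]
  rw [hdiff, hrem, binomial_taylor_iter_deriv q u n (k+1) τ (Ioo_subset_Icc_self hτ)]
  rw [Nat.descFactorial_eq_factorial_mul_choose]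
  have hfac : (Nat.factorial (k+1) : ℝ) ≠ 0 := by exact_mod_cast (k+1).factorial_ne_zero
  have hsub : n - (k+1) = n - k - 1 := by omega
  rw [hsub]
  push_cast
  field_simp
  ring


/-- Taylor-remainder identity for the binomial expectation of the truncated binomial sum:
there exists `τ ∈ [0,1]` with
`E_{N∼B(n,p)}[aᴺ Σ_{l=k+1}^N binom(N,l) xˡ]
  = binom(n,k+1) (apx)^{k+1} (ap(1+τx)+1-p)^{n-k-1}`. -/
theorem binomial_taylor_remainder (n k : ℕ) (p : ℝ) (hp : p ∈ Set.Icc (0 : ℝ) 1)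
    (a x : ℝ) :
    ∃ τ ∈ Set.Icc (0 : ℝ) 1,
      ∑ N ∈ Finset.range (n + 1),
          (n.choose N : ℝ) * p ^ N * (1 - p) ^ (n - N) * a ^ N *
            ∑ l ∈ Finset.Icc (k + 1) N, (N.choose l : ℝ) * x ^ l =
        (n.choose (k + 1) : ℝ) * (a * p * x) ^ (k + 1) *
          (a * p * (1 + τ * x) + 1 - p) ^ (n - k - 1) := by
  rw [binomial_taylor_closed_form]
  by_cases hkn : k + 1 ≤ n
  · obtain ⟨τ, hτ, h⟩ := binomial_taylor_step n k (a*p + (1-p)) (a*p*x) hkn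
    refine ⟨τ, hτ, ?_⟩
    rw [h]
    have hb : a * p * (1 + τ * x) + 1 - p = a*p + (1-p) + a*p*x * τ := by ring
    rw [hb]
  · refine ⟨0, by norm_num, ?_⟩
    have h1 : Finset.Icc (k+1) n = ∅ := Finset.Icc_eq_empty (by omega)
    have h2 : n.choose (k+1) = 0 := Nat.choose_eq_zero_of_lt (by omega)
    rw [h1, h2]
    simp
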